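/- Let K ≤ L ≤ H be finite groups with K normal in H, and let S ≤ H. Then π(|H : S|) \ π(H/K) = π(|L : L ∩ S|) \ π(H/K). -/

import Mathlib

/-- Let `K ≤ L ≤ H` with `K` normal in `H`, and let `S ≤ H`. Then
`π(|H : S|) \ π(H/K) = π(|L : L ∩ S|) \ π(H/K)`. -/
theorem primes_index_sdiff (H : Type) [Group H] [Finite H]
    (K L S : Subgroup H) [K.Normal] (hKL : K ≤ L) :
    S.index.primeFactors \ (Nat.card (H ⧸ K)).primeFactors =
      (S.relIndex L).primeFactors \ (Nat.card (H ⧸ K)).primeFactors := by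
  have hcard : Nat.card (H ⧸ K) = K.index := rfl
  -- key identities
  have h1 : (S ⊓ L).relIndex S * S.index = (S ⊓ L).index :=
    Subgroup.relIndex_mul_index inf_le_left
  have h2 : S.relIndex L * L.index = (S ⊓ L).index := by
    rw [← Subgroup.inf_relIndex_right]
    exact Subgroup.relIndex_mul_index inf_le_right
  -- divisibilities into K.index
  have ha : (S ⊓ L).relIndex S ∣ K.index := by
    have h3 : (S ⊓ L).relIndex S ∣ (S ⊓ K).relIndex S :=
      Subgroup.relIndex_dvd_of_le_left S (inf_le_inf_left S hKL)
    have h4 : (S ⊓ K).relIndex S = K.relIndex S := by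
      rw [inf_comm, Subgroup.inf_relIndex_right]
    rw [h4] at h3
    exact h3.trans (Subgroup.relIndex_dvd_index_of_normal K S)
  have hb : L.index ∣ K.index := Subgroup.index_dvd_of_le hKL
  have hSne : S.index ≠ 0 := Subgroup.index_ne_zero_of_finite
  have hrne : S.relIndex L ≠ 0 := by
    intro h
    have := h2
    rw [h, zero_mul] at this
    exact Subgroup.index_ne_zero_of_finite this.symm
  ext p
  simp only [Finset.mem_sdiff, Nat.mem_primeFactors, hcard]
  constructor
  · rintro ⟨⟨hp, hdvd, _⟩, hnot⟩
    have hpK : ¬ p ∣ K.index := fun h => hnot ⟨hp, h, Subgroup.index_ne_zero_of_finite⟩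
    refine ⟨⟨hp, ?_, hrne⟩, hnot⟩
    have : p ∣ S.relIndex L * L.index := by
      rw [h2]
      exact hdvd.trans (Subgroup.index_dvd_of_le inf_le_left)
    rcases hp.dvd_mul.mp this with h | h
    · exact h
    · exact absurd (h.trans hb) hpK
  · rintro ⟨⟨hp, hdvd, _⟩, hnot⟩
    have hpK : ¬ p ∣ K.index := fun h => hnot ⟨hp, h, Subgroup.index_ne_zero_of_finite⟩
    refine ⟨⟨hp, ?_, hSne⟩, hnot⟩
    have : p ∣ (S ⊓ L).relIndex S * S.index := by
      rw [h1, ← h2]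
      exact hdvd.trans (Dvd.intro _ rfl)
    rcases hp.dvd_mul.mp this with h | h
    · exact absurd (h.trans ha) hpK
    · exact h
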